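/- Let Φ be a finite crystallographic root system with simple roots Δ, and let α, β ∈ Δ with a·α + b·β ∈ Φ⁺ for positive integers a, b. Then Δ' = {aα + bβ} ∪ (Δ \ {α, β}) is the set of simple roots of the root subsystem Φ' = Φ ∩ span(Δ'), i.e., every element of Φ⁺ ∩ Φ' is a nonnegative integer combination of elements of Δ'. -/

import Mathlib

open scoped RealInnerProductSpace

/-- A finite crystallographic (reduced) root system in a Euclidean space `V`. -/
structure RootSystemData (V : Type*) [NormedAddCommGroup V] [InnerProductSpace ℝ V] where
  Φ : Set V
  finite : Φ.Finite
  nonzero : ∀ γ ∈ Φ, γ ≠ 0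
  neg_mem : ∀ γ ∈ Φ, -γ ∈ Φ
  reflect_mem : ∀ α ∈ Φ, ∀ β ∈ Φ, β - (2 * ⟪α, β⟫ / ⟪α, α⟫) • α ∈ Φ
  crystallographic : ∀ α ∈ Φ, ∀ β ∈ Φ, ∃ n : ℤ, 2 * ⟪α, β⟫ / ⟪α, α⟫ = (n : ℝ)
  reduced : ∀ γ ∈ Φ, ∀ t : ℝ, t • γ ∈ Φ → t = 1 ∨ t = -1

/-- A base (system of simple roots) for a root system: the simple roots form a basis of `V`
and every root has coordinates that are all nonnegative integers or all nonpositive integers. -/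
structure RootBase {V : Type*} [NormedAddCommGroup V] [InnerProductSpace ℝ V]
    (R : RootSystemData V) (ι : Type*) [Fintype ι] where
  b : Module.Basis ι ℝ V
  simple_mem : ∀ i, b i ∈ R.Φ
  coord_sign : ∀ γ ∈ R.Φ, (∀ i, 0 ≤ b.repr γ i) ∨ (∀ i, b.repr γ i ≤ 0)
  coord_int : ∀ γ ∈ R.Φ, ∀ i, ∃ n : ℤ, b.repr γ i = (n : ℝ)

namespace RootBase

variable {V : Type*} [NormedAddCommGroup V] [InnerProductSpace ℝ V]
  {R : RootSystemData V} {ι : Type*} [Fintype ι]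

/-- `γ` is a positive root. -/
def IsPos (B : RootBase R ι) (γ : V) : Prop := γ ∈ R.Φ ∧ ∀ i, 0 ≤ B.b.repr γ i

/-- The set of positive roots. -/
def Pos (B : RootBase R ι) : Set V := {γ | B.IsPos γ}

/-- The root poset order: coordinatewise comparison over the simple roots. -/
def rle (B : RootBase R ι) (γ γ' : V) : Prop := ∀ i, B.b.repr γ i ≤ B.b.repr γ' i

end RootBase

/-- All roots have the same length. -/
def RootSystemData.SimplyLaced {V : Type*} [NormedAddCommGroup V] [InnerProductSpace ℝ V]
    (R : RootSystemData V) : Prop := ∀ γ ∈ R.Φ, ∀ γ' ∈ R.Φ, ⟪γ, γ⟫ = ⟪γ', γ'⟫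

lemma inner_self_pos' {V : Type*} [NormedAddCommGroup V] [InnerProductSpace ℝ V]
    {x : V} (hx : x ≠ 0) : 0 < ⟪x, x⟫ :=
  lt_of_le_of_ne real_inner_self_nonneg (fun h => hx (inner_self_eq_zero.mp h.symm))

lemma sub_mem_of_inner_pos {V : Type*} [NormedAddCommGroup V] [InnerProductSpace ℝ V]
    (R : RootSystemData V) {γ γ' : V} (hγ : γ ∈ R.Φ) (hγ' : γ' ∈ R.Φ)
    (hpos : 0 < ⟪γ, γ'⟫) (hind : ∀ t : ℝ, γ ≠ t • γ') : γ - γ' ∈ R.Φ := by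
  have hγ0 : γ ≠ 0 := R.nonzero γ hγ
  have hγ'0 : γ' ≠ 0 := R.nonzero γ' hγ'
  have hγγ : 0 < ⟪γ, γ⟫ := inner_self_pos' hγ0
  have hγ'γ' : 0 < ⟪γ', γ'⟫ := inner_self_pos' hγ'0
  obtain ⟨q, hq⟩ := R.crystallographic γ hγ γ' hγ'
  obtain ⟨p, hp⟩ := R.crystallographic γ' hγ' γ hγ
  have hq0 : (0:ℝ) < q := by rw [← hq]; positivity
  have hp0 : (0:ℝ) < p := by
    rw [← hp]
    have : 0 < ⟪γ', γ⟫ := by rwa [real_inner_comm]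
    positivity
  -- strict Cauchy-Schwarz
  have hCS : ⟪γ, γ'⟫ * ⟪γ, γ'⟫ < ⟪γ, γ⟫ * ⟪γ', γ'⟫ := by
    have h1 : ⟪γ, γ'⟫ < ‖γ‖ * ‖γ'‖ := by
      refine inner_lt_norm_mul_iff_real.mpr ?_
      intro h
      apply hind (‖γ'‖⁻¹ * ‖γ‖)
      have h2 := congrArg (fun v => (‖γ'‖)⁻¹ • v) h
      simpa [smul_smul, inv_mul_cancel₀ (norm_ne_zero_iff.mpr hγ'0)] using h2
    calc ⟪γ, γ'⟫ * ⟪γ, γ'⟫ < (‖γ‖ * ‖γ'‖) * (‖γ‖ * ‖γ'‖) :=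
          mul_self_lt_mul_self hpos.le h1
      _ = ⟪γ, γ⟫ * ⟪γ', γ'⟫ := by
          rw [real_inner_self_eq_norm_mul_norm, real_inner_self_eq_norm_mul_norm]; ring
  have hqp4 : (q:ℝ) * (p:ℝ) < 4 := by
    have key : (q:ℝ) * (p:ℝ) * (⟪γ, γ⟫ * ⟪γ', γ'⟫) = 4 * (⟪γ, γ'⟫ * ⟪γ, γ'⟫) := by
      rw [← hq, ← hp, real_inner_comm γ' γ]
      field_simp
      ring
    nlinarith
  have hq1 : (1:ℤ) ≤ q := by exact_mod_cast hq0
  have hp1 : (1:ℤ) ≤ p := by exact_mod_cast hp0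
  have hqp : q * p < 4 := by exact_mod_cast hqp4
  have : q = 1 ∨ p = 1 := by
    by_contra h
    push_neg at h
    have h2 : 2 ≤ q := by omega
    have h3 : 2 ≤ p := by omega
    nlinarith
  rcases this with h1 | h1
  · have := R.reflect_mem γ hγ γ' hγ'
    rw [hq, h1] at this
    have := R.neg_mem _ this
    simpa using this
  · have := R.reflect_mem γ' hγ' γ hγ
    rw [hp, h1] at this
    simpa using this

/-- If α, β are simple roots with aα + bβ a positive root (a, b positive integers), then
Δ' = {aα + bβ} ∪ Δ \ {α, β} is a set of simple roots for the subsystem Φ' = Φ ∩ span Δ':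
every positive root of Φ lying in span Δ' is a nonnegative integer combination of Δ'. -/
theorem subsystem_simple_roots {V : Type*} [NormedAddCommGroup V] [InnerProductSpace ℝ V]
    {ι : Type*} [Fintype ι] [DecidableEq ι] (R : RootSystemData V) (B : RootBase R ι)
    (i j : ι) (hij : i ≠ j) (a b : ℕ) (ha : 0 < a) (hb : 0 < b)
    (hroot : B.IsPos ((a : ℝ) • B.b i + (b : ℝ) • B.b j)) :
    ∀ γ, B.IsPos γ →
      γ ∈ (Submodule.span ℝ ({(a : ℝ) • B.b i + (b : ℝ) • B.b j} ∪
            (Set.range B.b \ {B.b i, B.b j})) : Set V) →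
      ∃ (n : ℕ) (m : ι → ℕ), γ = (n : ℝ) • ((a : ℝ) • B.b i + (b : ℝ) • B.b j) +
        ∑ k ∈ Finset.univ \ {i, j}, (m k : ℝ) • B.b k := by
  classical
  set δ : V := (a : ℝ) • B.b i + (b : ℝ) • B.b j with hδdef
  set s : Finset ι := Finset.univ \ {i, j} with hsdef
  set Δ' : Set V := {δ} ∪ (Set.range B.b \ {B.b i, B.b j}) with hΔ'def
  have ha' : (0:ℝ) < a := by exact_mod_cast ha
  have hb' : (0:ℝ) < b := by exact_mod_cast hb
  have hδΦ : δ ∈ R.Φ := hroot.1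
  have hji : j ≠ i := hij.symm
  -- coordinates of δ
  have hδrepr : ∀ k, B.b.repr δ k =
      (if i = k then (a:ℝ) else 0) + (if j = k then (b:ℝ) else 0) := by
    intro k
    simp [hδdef, Module.Basis.repr_self, Finsupp.single_apply]
  have hδi : B.b.repr δ i = a := by rw [hδrepr]; simp [hji]
  have hδj : B.b.repr δ j = b := by rw [hδrepr]; simp [hij]
  have hδk : ∀ k, k ≠ i → k ≠ j → B.b.repr δ k = 0 := by
    intro k hki hkj
    rw [hδrepr]
    simp [Ne.symm hki, Ne.symm hkj]
  have hδsum : ∑ k, B.b.repr δ k = (a:ℝ) + b := by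
    simp [hδrepr, Finset.sum_add_distrib]
  -- membership in the span forces the i/j coordinate relation
  have hker : ∀ x, x ∈ (Submodule.span ℝ Δ' : Set V) →
      (b:ℝ) * B.b.repr x i = (a:ℝ) * B.b.repr x j := by
    intro x hx
    induction hx using Submodule.span_induction with
    | mem x hx =>
      rcases hx with hx | ⟨⟨k, rfl⟩, hk⟩
      · rw [Set.mem_singleton_iff] at hx
        subst hx
        rw [hδi, hδj]; ring
      · simp only [Set.mem_insert_iff, Set.mem_singleton_iff] at hk
        push_neg at hk
        have hki : k ≠ i := by rintro rfl; exact hk.1 rfl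
        have hkj : k ≠ j := by rintro rfl; exact hk.2 rfl
        simp [Module.Basis.repr_self, Finsupp.single_apply, Ne.symm hki, Ne.symm hkj, hki, hkj]
    | zero => simp
    | add x y hx hy ihx ihy =>
      simp only [map_add, Finsupp.add_apply]
      linarith
    | smul t x hx ihx =>
      simp only [map_smul, Finsupp.smul_apply, smul_eq_mul]
      linear_combination t * ihx
  suffices H : ∀ N : ℕ, ∀ γ, B.IsPos γ → γ ∈ (Submodule.span ℝ Δ' : Set V) →
      (∑ k, B.b.repr γ k) ≤ (N:ℝ) →
      ∃ (n : ℕ) (m : ι → ℕ), γ = (n : ℝ) • δ + ∑ k ∈ s, (m k : ℝ) • B.b k by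
    intro γ hγ hsp
    exact H ⌈∑ k, B.b.repr γ k⌉₊ γ hγ hsp (Nat.le_ceil _)
  intro N
  induction N with
  | zero =>
    intro γ hγ hsp hsum
    exfalso
    apply R.nonzero γ hγ.1
    have hz : ∀ k, B.b.repr γ k = 0 := by
      intro k
      by_contra hne
      have h1 : 0 < B.b.repr γ k := lt_of_le_of_ne (hγ.2 k) (Ne.symm hne)
      have h2 : 0 < ∑ k, B.b.repr γ k :=
        Finset.sum_pos' (fun k _ => hγ.2 k) ⟨k, Finset.mem_univ k, h1⟩
      norm_num at hsum
      linarith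
    rw [← B.b.sum_repr γ]
    exact Finset.sum_eq_zero fun k _ => by rw [hz k, zero_smul]
  | succ N ih =>
    intro γ hγ hsp hsum
    have hrel := hker γ hsp
    set c : ℝ := B.b.repr γ i / a with hcdef
    have hci : c * a = B.b.repr γ i := div_mul_cancel₀ _ ha'.ne'
    have hcj : c * b = B.b.repr γ j := by
      rw [hcdef, div_mul_eq_mul_div, eq_comm, eq_div_iff ha'.ne']
      linarith
    have hc0 : 0 ≤ c := div_nonneg (hγ.2 i) ha'.le
    have hpos : 0 < ⟪γ, γ⟫ := inner_self_pos' (R.nonzero γ hγ.1)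
    have hexp : ⟪γ, γ⟫ = ∑ k, B.b.repr γ k * ⟪B.b k, γ⟫ := by
      nth_rewrite 1 [← B.b.sum_repr γ]
      rw [sum_inner]
      simp [real_inner_smul_left]
    have hsplit : ∑ k, B.b.repr γ k * ⟪B.b k, γ⟫ =
        (∑ k ∈ s, B.b.repr γ k * ⟪B.b k, γ⟫) +
          (B.b.repr γ i * ⟪B.b i, γ⟫ + B.b.repr γ j * ⟪B.b j, γ⟫) := by
      rw [hsdef, ← Finset.sum_sdiff (Finset.subset_univ ({i, j} : Finset ι)),
        Finset.sum_pair hij]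
    have hdel : ⟪δ, γ⟫ = (a:ℝ) * ⟪B.b i, γ⟫ + (b:ℝ) * ⟪B.b j, γ⟫ := by
      rw [hδdef]
      rw [inner_add_left, real_inner_smul_left, real_inner_smul_left]
    have hdecomp : ⟪γ, γ⟫ = c * ⟪δ, γ⟫ + ∑ k ∈ s, B.b.repr γ k * ⟪B.b k, γ⟫ := by
      rw [hexp, hsplit, hdel]
      linear_combination (-⟪B.b i, γ⟫) * hci + (-⟪B.b j, γ⟫) * hcj
    by_cases hA : 0 < c * ⟪δ, γ⟫
    · -- the "new simple root" case
      have hc : 0 < c := by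
        by_contra h
        push_neg at h
        have hc' : c = 0 := le_antisymm h hc0
        rw [hc'] at hA
        simp at hA
      have hX : 0 < ⟪δ, γ⟫ := by
        by_contra h
        push_neg at h
        exact absurd hA (not_lt.mpr (mul_nonpos_iff.mpr (Or.inl ⟨hc0, h⟩)))
      by_cases hγδ : γ = δ
      · exact ⟨1, 0, by simp [hγδ]⟩
      · have hprop : ∀ t : ℝ, γ ≠ t • δ := by
          intro t h
          rcases R.reduced δ hδΦ t (by rw [← h]; exact hγ.1) with h1 | h1
          · exact hγδ (by rw [h, h1, one_smul])
          · rw [h1] at h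
            have hδ0 : 0 < ⟪δ, δ⟫ := inner_self_pos' (R.nonzero δ hδΦ)
            rw [h] at hX
            rw [real_inner_smul_right] at hX
            linarith
        have hsub : γ - δ ∈ R.Φ :=
          sub_mem_of_inner_pos R hγ.1 hδΦ (by rwa [real_inner_comm]) hprop
        have hsubrepr : ∀ k, B.b.repr (γ - δ) k = B.b.repr γ k - B.b.repr δ k := by
          intro k; rw [map_sub, Finsupp.sub_apply]
        have hpos' : ∀ k, 0 ≤ B.b.repr (γ - δ) k := by
          by_cases hzero : ∀ k ∈ s, B.b.repr γ k = 0
          · exfalso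
            have hγc : γ = c • δ := by
              rw [← B.b.sum_repr γ, ← Finset.sum_sdiff (Finset.subset_univ ({i, j} : Finset ι)),
                Finset.sum_pair hij, ← hsdef]
              rw [Finset.sum_eq_zero fun k hk => by rw [hzero k hk, zero_smul]]
              rw [hδdef, smul_add, smul_smul, smul_smul, hci, hcj, zero_add]
            rcases R.reduced δ hδΦ c (by rw [← hγc]; exact hγ.1) with h1 | h1
            · exact hγδ (by rw [hγc, h1, one_smul])
            · rw [h1] at hc; norm_num at hc
          · push_neg at hzero
            obtain ⟨k₀, hk₀s, hk₀⟩ := hzero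
            have hk₀pos : 0 < B.b.repr γ k₀ := lt_of_le_of_ne (hγ.2 k₀) (Ne.symm hk₀)
            have hk₀ij : k₀ ≠ i ∧ k₀ ≠ j := by
              rw [hsdef] at hk₀s
              simp only [Finset.mem_sdiff, Finset.mem_insert, Finset.mem_singleton] at hk₀s
              tauto
            rcases B.coord_sign _ hsub with h | h
            · exact h
            · exfalso
              have h2 := h k₀
              rw [hsubrepr, hδk k₀ hk₀ij.1 hk₀ij.2] at h2
              linarith
        have hspan' : γ - δ ∈ (Submodule.span ℝ Δ' : Set V) :=
          Submodule.sub_mem _ hsp (Submodule.subset_span (Or.inl rfl))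
        have hsum' : ∑ k, B.b.repr (γ - δ) k ≤ (N:ℝ) := by
          have heq : ∑ k, B.b.repr (γ - δ) k = (∑ k, B.b.repr γ k) - ((a:ℝ) + b) := by
            simp only [hsubrepr]
            rw [Finset.sum_sub_distrib, hδsum]
          rw [heq]
          push_cast at hsum ⊢
          have ha1 : (1:ℝ) ≤ a := by exact_mod_cast ha
          have hb1 : (1:ℝ) ≤ b := by exact_mod_cast hb
          linarith
        obtain ⟨n, m, heq⟩ := ih (γ - δ) ⟨hsub, hpos'⟩ hspan' hsum'
        refine ⟨n + 1, m, ?_⟩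
        have h3 : γ = ((n:ℝ) • δ + ∑ k ∈ s, (m k : ℝ) • B.b k) + δ := by
          rw [← heq]; abel
        rw [h3]
        push_cast
        rw [add_smul, one_smul]
        abel
    · by_cases hB : ∃ k ∈ s, 0 < B.b.repr γ k * ⟪B.b k, γ⟫
      · obtain ⟨k₀, hk₀s, hk₀⟩ := hB
        have hk₀ij : k₀ ≠ i ∧ k₀ ≠ j := by
          rw [hsdef] at hk₀s
          simp only [Finset.mem_sdiff, Finset.mem_insert, Finset.mem_singleton] at hk₀s
          tauto
        have hf : 0 < B.b.repr γ k₀ := by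
          rcases lt_or_eq_of_le (hγ.2 k₀) with h | h
          · exact h
          · exfalso; rw [← h] at hk₀; simp at hk₀
        have hX : 0 < ⟪B.b k₀, γ⟫ := by
          by_contra h
          push_neg at h
          exact absurd hk₀ (not_lt.mpr (mul_nonpos_iff.mpr (Or.inl ⟨hγ.2 k₀, h⟩)))
        by_cases hγk : γ = B.b k₀
        · refine ⟨0, fun k => if k = k₀ then 1 else 0, ?_⟩
          rw [hγk]
          push_cast
          simp only [Nat.cast_zero, zero_smul, zero_add, apply_ite, Nat.cast_one,
            Nat.cast_zero, ite_smul, one_smul, zero_smul]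
          rw [Finset.sum_ite_eq' s k₀ (fun k => B.b k), if_pos hk₀s]
        · have hbk₀Φ : B.b k₀ ∈ R.Φ := B.simple_mem k₀
          have hprop : ∀ t : ℝ, γ ≠ t • B.b k₀ := by
            intro t h
            rcases R.reduced _ hbk₀Φ t (by rw [← h]; exact hγ.1) with h1 | h1
            · exact hγk (by rw [h, h1, one_smul])
            · rw [h1] at h
              have h0 : 0 < ⟪B.b k₀, B.b k₀⟫ := inner_self_pos' (R.nonzero _ hbk₀Φ)
              rw [h] at hX
              rw [real_inner_smul_right] at hX
              linarith
          have hsub : γ - B.b k₀ ∈ R.Φ :=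
            sub_mem_of_inner_pos R hγ.1 hbk₀Φ (by rwa [real_inner_comm]) hprop
          have hsubrepr : ∀ k, B.b.repr (γ - B.b k₀) k =
              B.b.repr γ k - (if k₀ = k then (1:ℝ) else 0) := by
            intro k
            rw [map_sub, Finsupp.sub_apply, Module.Basis.repr_self, Finsupp.single_apply]
          have hf1 : (1:ℝ) ≤ B.b.repr γ k₀ := by
            obtain ⟨z, hz⟩ := B.coord_int γ hγ.1 k₀
            rw [hz] at hf ⊢
            exact_mod_cast (by exact_mod_cast hf : (0:ℤ) < z)
          have hpos' : ∀ k, 0 ≤ B.b.repr (γ - B.b k₀) k := by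
            intro k
            rw [hsubrepr]
            by_cases hkk : k₀ = k
            · subst hkk
              rw [if_pos rfl]
              linarith
            · rw [if_neg hkk, sub_zero]
              exact hγ.2 k
          have hmem : B.b k₀ ∈ Δ' := by
            refine Or.inr ⟨⟨k₀, rfl⟩, ?_⟩
            simp only [Set.mem_insert_iff, Set.mem_singleton_iff]
            push_neg
            exact ⟨fun h => hk₀ij.1 (B.b.injective h), fun h => hk₀ij.2 (B.b.injective h)⟩
          have hspan' : γ - B.b k₀ ∈ (Submodule.span ℝ Δ' : Set V) :=
            Submodule.sub_mem _ hsp (Submodule.subset_span hmem)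
          have hsum' : ∑ k, B.b.repr (γ - B.b k₀) k ≤ (N:ℝ) := by
            have heq : ∑ k, B.b.repr (γ - B.b k₀) k = (∑ k, B.b.repr γ k) - 1 := by
              simp only [hsubrepr]
              rw [Finset.sum_sub_distrib]
              simp
            rw [heq]
            push_cast at hsum ⊢
            linarith
          obtain ⟨n, m, heq⟩ := ih (γ - B.b k₀) ⟨hsub, hpos'⟩ hspan' hsum'
          refine ⟨n, Function.update m k₀ (m k₀ + 1), ?_⟩
          have hks : ∑ k ∈ s, ((Function.update m k₀ (m k₀ + 1) k : ℕ):ℝ) • B.b k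
              = (∑ k ∈ s, (m k : ℝ) • B.b k) + B.b k₀ := by
            rw [Finset.sum_eq_add_sum_sdiff_singleton_of_mem hk₀s
                (fun k => ((Function.update m k₀ (m k₀ + 1) k : ℕ):ℝ) • B.b k),
              Finset.sum_eq_add_sum_sdiff_singleton_of_mem hk₀s (fun k => ((m k : ℕ):ℝ) • B.b k)]
            have hupd : ∀ k ∈ s \ {k₀},
                ((Function.update m k₀ (m k₀ + 1) k : ℕ):ℝ) • B.b k = ((m k : ℕ):ℝ) • B.b k := by
              intro k hk
              rw [Function.update_of_ne (Finset.notMem_singleton.mp (Finset.mem_sdiff.mp hk).2)]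
            rw [Finset.sum_congr rfl hupd, Function.update_self]
            push_cast
            rw [add_smul, one_smul]
            abel
          have h3 : γ = ((n:ℝ) • δ + ∑ k ∈ s, (m k : ℝ) • B.b k) + B.b k₀ := by
            rw [← heq]; abel
          rw [h3, hks]
          abel
      · exfalso
        push_neg at hA hB
        have hsum0 : ∑ k ∈ s, B.b.repr γ k * ⟪B.b k, γ⟫ ≤ 0 :=
          Finset.sum_nonpos hB
        linarith
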